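/- In F_2[x_1,x_2], if a polynomial Q of degree d is B-invariant for the Borel subgroup (i.e. invariant under x_2 ↦ x_1 + x_2) and is written Q = x_1^q x_2^q (x_1+x_2)^q Q' with q maximal, and Q' contains the monomial x_1^i for some i, then the lexicographically largest monomial of Q is x_1^{2q+i} x_2^q. -/

import Mathlib

open MvPolynomial

private lemma weight_two (d : Fin 2 →₀ ℕ) : (Finsupp.weight (1 : Fin 2 → ℕ)) d = d 0 + d 1 := by
  simp [Finsupp.weight_apply, Finsupp.sum_fintype, Fin.sum_univ_two]

private lemma Ahom (q : ℕ) :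
    ((X 0 * X 1 * (X 0 + X 1) : MvPolynomial (Fin 2) (ZMod 2))^q).IsHomogeneous (3*q) := by
  have h1 : (X 0 * X 1 * (X 0 + X 1) : MvPolynomial (Fin 2) (ZMod 2)).IsHomogeneous 3 := by
    have := ((isHomogeneous_X (ZMod 2) (0:Fin 2)).mul (isHomogeneous_X (ZMod 2) (1:Fin 2))).mul
      ((isHomogeneous_X (ZMod 2) (0:Fin 2)).add (isHomogeneous_X (ZMod 2) (1:Fin 2)))
    simpa using this
  simpa [mul_comm] using h1.pow q

/-- coeff of X0^q in (X0+X1)^q is 1. -/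
private lemma coeff_add_pow (q : ℕ) :
    coeff (Finsupp.single (0:Fin 2) q) ((X 0 + X 1 : MvPolynomial (Fin 2) (ZMod 2))^q) = 1 := by
  rw [add_pow]
  rw [coeff_sum]
  have : ∀ k ∈ Finset.range (q+1),
      coeff (Finsupp.single (0:Fin 2) q)
        ((X 0:MvPolynomial (Fin 2) (ZMod 2))^k * X 1^(q-k) * (q.choose k : MvPolynomial (Fin 2) (ZMod 2)))
      = if k = q then 1 else 0 := by
    intro k hk
    rw [Finset.mem_range] at hk
    rw [X_pow_eq_monomial, X_pow_eq_monomial, monomial_mul, one_mul, ← C_eq_coe_nat, mul_comm,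
      coeff_C_mul, coeff_monomial, mul_ite, mul_one, mul_zero]
    split_ifs with h1 h2 h2
    · simp [h2]
    · exfalso; apply h2
      have := DFunLike.congr_fun h1 (1 : Fin 2)
      simp [Finsupp.single_apply] at this
      omega
    · exfalso; apply h1
      subst h2
      simp
    · rfl
  rw [Finset.sum_congr rfl this]
  simp

private lemma coeff_Apow (q : ℕ) :
    coeff (Finsupp.single (0:Fin 2) (2*q) + Finsupp.single (1:Fin 2) q)
      ((X 0 * X 1 * (X 0 + X 1) : MvPolynomial (Fin 2) (ZMod 2))^q) = 1 := by
  have h : ((X 0 * X 1 * (X 0 + X 1) : MvPolynomial (Fin 2) (ZMod 2))^q)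
      = monomial (Finsupp.single (0:Fin 2) q + Finsupp.single (1:Fin 2) q) 1 * (X 0 + X 1)^q := by
    rw [mul_pow, mul_pow, X_pow_eq_monomial, X_pow_eq_monomial, monomial_mul, one_mul]
  rw [h]
  have hexp : Finsupp.single (0:Fin 2) (2*q) + Finsupp.single (1:Fin 2) q
      = (Finsupp.single (0:Fin 2) q + Finsupp.single (1:Fin 2) q) + Finsupp.single (0:Fin 2) q := by
    ext j; fin_cases j <;> simp [Finsupp.single_apply] <;> omega
  rw [hexp, coeff_monomial_mul, one_mul, coeff_add_pow]

/-- every exponent in A^q has second coordinate ≥ q and degree 3q. -/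
private lemma supp_Apow (q : ℕ) (e : Fin 2 →₀ ℕ)
    (he : e ∈ ((X 0 * X 1 * (X 0 + X 1) : MvPolynomial (Fin 2) (ZMod 2))^q).support) :
    q ≤ e 1 ∧ e 0 + e 1 = 3*q := by
  constructor
  · have h : (X 0 * X 1 * (X 0 + X 1) : MvPolynomial (Fin 2) (ZMod 2))
        = X 1 * (X 0 * (X 0 + X 1)) := by ring
    rw [h, mul_pow, X_pow_eq_monomial] at he
    have := support_mul _ _ he
    rw [Finset.mem_add] at this
    obtain ⟨a, ha, b, hb, rfl⟩ := this
    rw [support_monomial, if_neg one_ne_zero, Finset.mem_singleton] at ha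
    subst ha
    simp
  · have := Ahom q (mem_support_iff.mp he)
    rw [← weight_two e]
    exact this

/-- In `F₂[x₁,x₂]`: if a nonzero homogeneous polynomial `Q` of degree `d` is invariant
under `x₂ ↦ x₁ + x₂`, and `Q = (x₁ x₂ (x₁+x₂))^q · Q'` with `q` maximal (i.e.
`x₁ x₂ (x₁+x₂) ∤ Q'`), and `Q'` contains the monomial `x₁^i`, then the lexicographically
largest monomial of `Q` is `x₁^(2q+i) x₂^q`. -/
theorem stmt8 (Q Q' : MvPolynomial (Fin 2) (ZMod 2)) (d q i : ℕ) (hQ0 : Q ≠ 0)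
    (hhom : Q.IsHomogeneous d)
    (hinv : MvPolynomial.aeval ![X 0, X 0 + X 1] Q = Q)
    (hfac : Q = (X 0 * X 1 * (X 0 + X 1)) ^ q * Q')
    (hqmax : ¬ ((X 0 * X 1 * (X 0 + X 1) : MvPolynomial (Fin 2) (ZMod 2)) ∣ Q'))
    (hi : MvPolynomial.coeff (Finsupp.single (0 : Fin 2) i) Q' ≠ 0) :
    (Finsupp.single (0 : Fin 2) (2 * q + i) + Finsupp.single (1 : Fin 2) q) ∈ Q.support ∧
      ∀ e ∈ Q.support, toLex e ≤
        toLex (Finsupp.single (0 : Fin 2) (2 * q + i) + Finsupp.single (1 : Fin 2) q) := by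
  set T := Finsupp.single (0 : Fin 2) (2 * q + i) + Finsupp.single (1 : Fin 2) q with hT
  have hT0v : T 0 = 2*q + i := by simp [hT]
  have hT1v : T 1 = q := by simp [hT]
  have hcoeff : coeff T Q = coeff (Finsupp.single (0:Fin 2) i) Q' := by
    rw [hfac, coeff_mul]
    rw [Finset.sum_eq_single
      ((Finsupp.single (0:Fin 2) (2*q) + Finsupp.single (1:Fin 2) q), Finsupp.single (0:Fin 2) i)]
    · rw [coeff_Apow, one_mul]
    · rintro ⟨p1, p2⟩ hmem hne
      by_contra hc
      have h1 : coeff p1 ((X 0 * X 1 * (X 0 + X 1) : MvPolynomial (Fin 2) (ZMod 2))^q) ≠ 0 :=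
        fun h => hc (by rw [h, zero_mul])
      have hp := supp_Apow q p1 (mem_support_iff.mpr h1)
      rw [Finset.HasAntidiagonal.mem_antidiagonal] at hmem
      have e0 : p1 0 + p2 0 = 2*q + i := by
        have := DFunLike.congr_fun hmem 0; simpa [hT0v] using this
      have e1 : p1 1 + p2 1 = q := by
        have := DFunLike.congr_fun hmem 1; simpa [hT1v] using this
      apply hne
      have hp11 : p1 1 = q := by omega
      have hp10 : p1 0 = 2*q := by omega
      have hp21 : p2 1 = 0 := by omega
      have hp20 : p2 0 = i := by omega
      ext j
      · fin_cases j <;> simp [hp10, hp11]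
      · fin_cases j <;> simp [hp20, hp21]
    · intro h
      exfalso; apply h
      rw [Finset.HasAntidiagonal.mem_antidiagonal]
      ext j; fin_cases j <;> simp [hT, Finsupp.single_apply] <;> omega
  have hTne : coeff T Q ≠ 0 := by rw [hcoeff]; exact hi
  have hTmem : T ∈ Q.support := mem_support_iff.mpr hTne
  have hd : 3*q + i = d := by
    have := hhom hTne
    rw [weight_two] at this
    omega
  refine ⟨hTmem, ?_⟩
  intro e he
  have he' := he
  rw [hfac] at he'
  have hsub := support_mul _ _ he'
  rw [Finset.mem_add] at hsub
  obtain ⟨a, ha, b, hb, rfl⟩ := hsub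
  have hpa := supp_Apow q a ha
  have hdeg : (a+b) 0 + (a+b) 1 = d := by
    rw [← weight_two]; exact hhom (mem_support_iff.mp he)
  simp only [Finsupp.add_apply] at hdeg
  rcases lt_or_eq_of_le (show a 0 + b 0 ≤ 2*q + i by omega) with hlt | heq
  · apply le_of_lt
    show Finsupp.Lex (· < ·) (· < ·) (a+b) T
    rw [Finsupp.lex_def]
    refine ⟨0, fun d hd => absurd hd (Fin.not_lt_zero d), ?_⟩
    simpa [hT0v] using hlt
  · have ha0 : a 0 = 2*q := by omega
    have hb0 : b 0 = i := by omega
    have ha1 : a 1 = q := by omega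
    have hb1 : b 1 = 0 := by omega
    have : a + b = T := by
      ext j; fin_cases j <;> simp [ha0, hb0, ha1, hb1, hT0v, hT1v]
    rw [this]
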